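/- Let f : D → ℝ^n be a continuous, discrete mapping on a domain D ⊂ ℝ^n, let α : [a,c) → D be a path whose image is contained in a compact subset K of D, and suppose that f ∘ α : [a,c) → ℝ^n extends to a continuous path β : [a,c] → ℝ^n. Then α extends to a continuous path α : [a,c] → K; that is, the limit of α(t) as t → c⁻ exists. In particular, the cluster set G = {x ∈ ℝ^n : x = lim_{k→∞} α(t_k) for some sequence t_k ∈ [a,c) with t_k → c} is a single point. -/

import Mathlib

open MeasureTheory Metric Set Filter Topology
open scoped ENNReal NNReal Classical

noncomputable section

/-- Euclidean space `ℝⁿ`. -/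
abbrev Eucl (n : ℕ) : Type := EuclideanSpace ℝ (Fin n)

/-- Projection from the one-point compactification `ℝ̄ⁿ = ℝⁿ ∪ {∞}` back to `ℝⁿ`,
sending the point `∞` to the junk value `0`. -/
def opProj {X : Type*} [Zero X] (y : OnePoint X) : X := Option.getD y 0

/-- The point of the curve `γ` (defined on the parameter set `s ⊆ ℝ`) lying at
arclength `u` from its beginning: the arclength parametrization of `γ`. -/
def arcParamOn {X : Type*} [PseudoEMetricSpace X] (γ : ℝ → X) (s : Set ℝ) (u : ℝ) : X :=
  γ (sInf {t | t ∈ s ∧ ENNReal.ofReal u ≤ eVariationOn γ (s ∩ Set.Iic t)})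

/-- The line integral `∫_γ ρ ds` of a Borel function `ρ : ℝⁿ → [0,∞]` along a curve
`γ` defined on the parameter set `s ⊆ ℝ`, computed via the arclength parametrization.
By the standard convention, the line integral along a non-rectifiable curve is `∞`. -/
def lineIntegral {X : Type*} [PseudoEMetricSpace X] (ρ : X → ℝ≥0∞) (s : Set ℝ)
    (γ : ℝ → X) : ℝ≥0∞ :=
  if eVariationOn γ s = ∞ then ∞
  else ∫⁻ u in Set.Icc 0 (eVariationOn γ s).toReal, ρ (arcParamOn γ s u)

/-- Line integral of `ρ : ℝⁿ → [0,∞]` along a curve into `ℝ̄ⁿ`; a curve passing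
through `∞` is treated as non-rectifiable, i.e. the integral is `∞`. -/
def lineIntegralOP {n : ℕ} (ρ : Eucl n → ℝ≥0∞) (s : Set ℝ)
    (γ : ℝ → OnePoint (Eucl n)) : ℝ≥0∞ :=
  if ∀ t ∈ s, γ t ≠ OnePoint.infty then lineIntegral ρ s (fun t => opProj (γ t)) else ∞

/-- A curve, recorded as its parameter set (an interval in `ℝ`) together with the map. -/
abbrev Curve (X : Type*) := Set ℝ × (ℝ → X)

/-- A Borel function `ρ : ℝⁿ → [0,∞]` is admissible for a family `Γ` of curves in `ℝ̄ⁿ`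
if `∫_γ ρ ds ≥ 1` for every `γ ∈ Γ`. -/
def IsAdmissible {n : ℕ} (ρ : Eucl n → ℝ≥0∞) (Γ : Set (Curve (OnePoint (Eucl n)))) : Prop :=
  Measurable ρ ∧ ∀ c ∈ Γ, 1 ≤ lineIntegralOP ρ c.1 c.2

/-- The `p`-modulus `M_p(Γ)` of a family of curves in `ℝ̄ⁿ`:
`M_p(Γ) = inf ∫ ρ(x)^p dm(x)` over all admissible `ρ`. -/
def modulus {n : ℕ} (p : ℝ) (Γ : Set (Curve (OnePoint (Eucl n)))) : ℝ≥0∞ :=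
  ⨅ (ρ : Eucl n → ℝ≥0∞) (_ : IsAdmissible ρ Γ), ∫⁻ x, ρ x ^ p

/-- The family `Γ(S₁,S₂,A)` of all curves joining `S₁` and `S₂` in `A`:
`γ : [a,b] → ℝⁿ` with `γ a ∈ S₁`, `γ b ∈ S₂` and `γ t ∈ A` for `a < t < b`. -/
def joinFam {n : ℕ} (S₁ S₂ A : Set (Eucl n)) : Set (Curve (Eucl n)) :=
  {c | ∃ a b : ℝ, a < b ∧ c.1 = Set.Icc a b ∧ ContinuousOn c.2 (Set.Icc a b) ∧
    c.2 a ∈ S₁ ∧ c.2 b ∈ S₂ ∧ ∀ t ∈ Set.Ioo a b, c.2 t ∈ A}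

/-- The image family `fΓ = {f ∘ γ : γ ∈ Γ}`. -/
def imageFam {n : ℕ} (f : Eucl n → OnePoint (Eucl n)) (Γ : Set (Curve (Eucl n))) :
    Set (Curve (OnePoint (Eucl n))) :=
  {c | ∃ g ∈ Γ, c = (g.1, fun t => f (g.2 t))}

/-- The spherical annulus (ring) `A(r₁,r₂,x₀) = {x : r₁ < |x-x₀| < r₂}`. -/
def ann {n : ℕ} (x₀ : Eucl n) (r₁ r₂ : ℝ) : Set (Eucl n) :=
  {x | r₁ < dist x x₀ ∧ dist x x₀ < r₂}

/-- `f : D → ℝ̄ⁿ` is a ring `(p,Q)`-mapping: `f` is continuous on `D` and for every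
`x₀ ∈ D`, all radii `0 < r₁ < r₂ < dist(x₀, ∂D)` and every measurable
`η : (r₁,r₂) → [0,∞]` with `∫_{r₁}^{r₂} η(r) dr ≥ 1`, one has
`M_p(f(Γ(S₁,S₂,A))) ≤ ∫_A Q(x) η(|x-x₀|)^p dm(x)`. -/
def IsRingMapping {n : ℕ} (p : ℝ) (D : Set (Eucl n)) (Q : Eucl n → ℝ≥0∞)
    (f : Eucl n → OnePoint (Eucl n)) : Prop :=
  ContinuousOn f D ∧
  ∀ x₀ ∈ D, ∀ r₁ r₂ : ℝ, 0 < r₁ → r₁ < r₂ →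
    ENNReal.ofReal r₂ < EMetric.infEdist x₀ Dᶜ →
    ∀ η : ℝ → ℝ≥0∞, Measurable η → 1 ≤ ∫⁻ r in Set.Ioo r₁ r₂, η r →
      modulus p (imageFam f
          (joinFam (Metric.sphere x₀ r₁) (Metric.sphere x₀ r₂) (ann x₀ r₁ r₂)))
        ≤ ∫⁻ x in ann x₀ r₁ r₂, Q x * η (dist x x₀) ^ p

/-- `f` is discrete on `D`: every fiber `f⁻¹(y)` consists of isolated points. -/
def DiscreteOn {X Y : Type*} [TopologicalSpace X] (f : X → Y) (D : Set X) : Prop :=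
  ∀ y : Y, ∀ x ∈ D, f x = y → ∃ U ∈ 𝓝 x, ∀ z ∈ U, z ∈ D → f z = y → z = x

/-- `f` is open on `D`: images of open subsets of `D` are open. -/
def OpenOn {X Y : Type*} [TopologicalSpace X] [TopologicalSpace Y]
    (f : X → Y) (D : Set X) : Prop :=
  ∀ U ⊆ D, IsOpen U → IsOpen (f '' U)

/-- `Q ∈ L¹_loc(D)` for `Q : D → [0,∞]`. -/
def LocIntOn {n : ℕ} (Q : Eucl n → ℝ≥0∞) (D : Set (Eucl n)) : Prop :=
  Measurable Q ∧ ∀ K ⊆ D, IsCompact K → ∫⁻ x in K, Q x ≠ ∞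

/-- `h : [a,b] → F` is absolutely continuous: for every `ε > 0` there is `δ > 0` such
that for any finite collection of mutually non-overlapping subintervals
`[uᵢ,vᵢ] ⊆ [a,b]` of total length `< δ` one has `Σ ‖h(vᵢ) - h(uᵢ)‖ < ε`. -/
def AbsContOnInt {F : Type*} [NormedAddCommGroup F] (h : ℝ → F) (a b : ℝ) : Prop :=
  ∀ ε : ℝ, 0 < ε → ∃ δ : ℝ, 0 < δ ∧ ∀ k : ℕ, ∀ u v : Fin k → ℝ,
    (∀ i, a ≤ u i ∧ u i ≤ v i ∧ v i ≤ b) →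
    (Pairwise fun i j => Disjoint (Set.Ioo (u i) (v i)) (Set.Ioo (u j) (v j))) →
    (∑ i, (v i - u i)) < δ → (∑ i, ‖h (v i) - h (u i)‖) < ε

/-- The closed coordinate box with corners `lo`, `hi`. -/
def box {n : ℕ} (lo hi : Eucl n) : Set (Eucl n) :=
  {x : Eucl n | ∀ i, lo i ≤ x i ∧ x i ≤ hi i}

/-- `u` is `ACL` (absolutely continuous on lines) on the open set `A ⊆ ℝⁿ`: for every
closed coordinate box contained in `A` and every coordinate direction `j`,
`u` is absolutely continuous on almost every line segment of the box parallel to the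
`j`-th axis. -/
def ACLOn {n : ℕ} {F : Type*} [NormedAddCommGroup F] (u : Eucl n → F)
    (A : Set (Eucl n)) : Prop :=
  ∀ lo hi : Eucl n, (∀ i, lo i < hi i) → box lo hi ⊆ A →
    ∀ j : Fin n, ∀ᵐ x ∂(volume : Measure (Eucl n)), x ∈ box lo hi →
      AbsContOnInt (fun t => u (WithLp.toLp 2 (Function.update (WithLp.ofLp x) j t))) (lo j) (hi j)

/-- The `p`-capacity of a condenser `(A, C)`:
`cap_p(A,C) = inf ∫_A |∇u|^p dm` over all nonnegative continuous `ACL` functions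
`u` on `A` with `u ≥ 1` on `C`. -/
def pCapacity {n : ℕ} (p : ℝ) (A C : Set (Eucl n)) : ℝ≥0∞ :=
  ⨅ (u : Eucl n → ℝ) (_ : ContinuousOn u A ∧ (∀ x ∈ A, 0 ≤ u x) ∧
      (∀ x ∈ C, 1 ≤ u x) ∧ ACLOn u A),
    ∫⁻ x in A, ENNReal.ofReal (‖fderiv ℝ u x‖ ^ p)


/-- Let `f : D → ℝⁿ` be continuous and discrete on a domain `D ⊆ ℝⁿ`, let
`α : [a,c) → D` be a path whose image lies in a compact `K ⊆ D`, and suppose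
`f ∘ α` extends to a continuous path `β : [a,c] → ℝⁿ`. Then `lim_{t→c⁻} α(t)`
exists (in `K`); in particular the cluster set of `α` at `c` is a single point. -/
theorem lift_extends_to_endpoint (n : ℕ) (D : Set (Eucl n)) (hD : IsOpen D)
    (hDconn : IsConnected D) (f : Eucl n → Eucl n) (hfc : ContinuousOn f D)
    (hdisc : DiscreteOn f D)
    (a c : ℝ) (hac : a < c) (α : ℝ → Eucl n) (hα : ContinuousOn α (Set.Ico a c))
    (K : Set (Eucl n)) (hK : IsCompact K) (hKD : K ⊆ D)
    (hαK : Set.MapsTo α (Set.Ico a c) K)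
    (β : ℝ → Eucl n) (hβ : ContinuousOn β (Set.Icc a c))
    (hβα : ∀ t ∈ Set.Ico a c, β t = f (α t)) :
    ∃ x₀ ∈ K, Filter.Tendsto α (𝓝[Set.Ico a c] c) (𝓝 x₀) ∧
      {x : Eucl n | ∃ s : ℕ → ℝ, (∀ k, s k ∈ Set.Ico a c) ∧
        Filter.Tendsto s Filter.atTop (𝓝 c) ∧
        Filter.Tendsto (fun k => α (s k)) Filter.atTop (𝓝 x)} = {x₀} := by
  -- The approach filter
  have hF : (𝓝[Set.Ico a c] c).NeBot := by
    rw [nhdsWithin_Ico_eq_nhdsLT hac]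
    exact nhdsLT_neBot c
  set F := 𝓝[Set.Ico a c] c with hFdef
  have hIco : Set.Ico a c ∈ F := self_mem_nhdsWithin
  have hmapK : Filter.map α F ≤ 𝓟 K :=
    Filter.le_principal_iff.2 (Filter.mem_map.2
      (Filter.mem_of_superset hIco fun t ht => hαK ht))
  have hβtend : Filter.Tendsto β F (𝓝 (β c)) :=
    (hβ c (Set.right_mem_Icc.2 hac.le)).mono_left
      (nhdsWithin_mono c Set.Ico_subset_Icc_self)
  have hfa : Filter.map (fun t => f (α t)) F = Filter.map β F :=
    Filter.map_congr (Filter.eventually_of_mem hIco fun t ht => (hβα t ht).symm)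
  -- Every cluster point of α along F lies in K and in the fiber f⁻¹(β c)
  have claimA : ∀ x, MapClusterPt x F α → x ∈ K ∧ f x = β c := by
    intro x hx
    have hx' : ClusterPt x (Filter.map α F) := hx
    have hxK : x ∈ K := by
      have h1 : ClusterPt x (𝓟 K) := hx'.mono hmapK
      have := mem_closure_iff_clusterPt.2 h1
      rwa [hK.isClosed.closure_eq] at this
    have hcx : ContinuousAt f x := hfc.continuousAt (hD.mem_nhds (hKD hxK))
    have hle : Filter.map f (𝓝 x ⊓ Filter.map α F) ≤
        𝓝 (f x) ⊓ Filter.map (fun t => f (α t)) F := by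
      refine le_trans Filter.map_inf_le (inf_le_inf hcx ?_)
      rw [Filter.map_map]
      exact le_of_eq rfl
    have h1 : ClusterPt (f x) (Filter.map (fun t => f (α t)) F) :=
      by
      have hxne : (𝓝 x ⊓ Filter.map α F).NeBot := hx'
      exact Filter.NeBot.mono (hxne.map f) hle
    have h2 : Filter.map (fun t => f (α t)) F ≤ 𝓝 (β c) := by
      rw [hfa]; exact hβtend
    have h3 : ClusterPt (f x) (𝓝 (β c)) := h1.mono h2
    have h4 : (𝓝 (f x) ⊓ 𝓝 (β c)).NeBot := h3
    exact ⟨hxK, eq_of_nhds_neBot h4⟩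
  -- pick a cluster point x₀
  haveI := hF
  obtain ⟨x₀, hx₀K, hx₀'⟩ := hK.exists_mapClusterPt hmapK
  -- main convergence claim
  have htend : Filter.Tendsto α F (𝓝 x₀) := by
    by_contra hne
    rw [Metric.tendsto_nhds] at hne
    push_neg at hne
    obtain ⟨ε, hε, hfreq⟩ := hne
    have hfreq' : ∃ᶠ t in F, ε ≤ dist (α t) x₀ :=
      hfreq.mono fun t ht => ht
    obtain ⟨U, hU, hUdisc⟩ := hdisc (β c) x₀ (hKD hx₀K) (claimA x₀ hx₀').2
    obtain ⟨δ, hδ, hδU⟩ := Metric.mem_nhds_iff.1 hU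
    set r := min (δ / 2) ε with hrdef
    have hr0 : 0 < r := lt_min (half_pos hδ) hε
    have hrε : r ≤ ε := min_le_right _ _
    have hrδ : r < δ := (min_le_left _ _).trans_lt (half_lt_self hδ)
    set S : Set ℝ := {t | dist (α t) x₀ = r} with hSdef
    have hSne : (F ⊓ 𝓟 S).NeBot := by
      rw [Filter.inf_principal_neBot_iff]
      intro V hV
      obtain ⟨W, hWopen, hcW, hWV⟩ := mem_nhdsWithin.1 hV
      obtain ⟨δ', hδ', hδ'W⟩ := Metric.isOpen_iff.1 hWopen c hcW
      have hE : Set.Ioi (c - δ') ∩ Set.Ico a c ∈ F :=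
        Filter.inter_mem
          (mem_nhdsWithin_of_mem_nhds (Ioi_mem_nhds (by linarith))) hIco
      have h1 : ∃ᶠ t in F, dist (α t) x₀ < r := by
        have hb : Metric.ball x₀ r ∈ 𝓝 x₀ := Metric.ball_mem_nhds _ hr0
        exact mapClusterPt_iff_frequently.1 hx₀' _ hb
      obtain ⟨s₁, hs₁d, hs₁E⟩ :=
        (h1.and_eventually (Filter.eventually_of_mem hE fun t ht => ht)).exists
      obtain ⟨s₂, hs₂d, hs₂E⟩ :=
        (hfreq'.and_eventually (Filter.eventually_of_mem hE fun t ht => ht)).exists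
      have hsub : Set.uIcc s₁ s₂ ⊆ Set.Ico a c := by
        intro t ht
        rw [Set.mem_uIcc] at ht
        rcases ht with ⟨h1, h2⟩ | ⟨h1, h2⟩
        · exact ⟨hs₁E.2.1.trans h1, lt_of_le_of_lt h2 hs₂E.2.2⟩
        · exact ⟨hs₂E.2.1.trans h1, lt_of_le_of_lt h2 hs₁E.2.2⟩
      have hcont : ContinuousOn (fun t => dist (α t) x₀) (Set.uIcc s₁ s₂) :=
        Continuous.comp_continuousOn (continuous_dist.comp (continuous_id.prodMk continuous_const)) (hα.mono hsub)
      have hmem : r ∈ Set.uIcc (dist (α s₁) x₀) (dist (α s₂) x₀) := by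
        rw [Set.mem_uIcc]
        exact Or.inl ⟨hs₁d.le, hrε.trans hs₂d⟩
      obtain ⟨t, htmem, htd⟩ := intermediate_value_uIcc hcont hmem
      have htIco : t ∈ Set.Ico a c := hsub htmem
      have htgt : c - δ' < t := by
        rw [Set.mem_uIcc] at htmem
        rcases htmem with ⟨h1, _⟩ | ⟨h1, _⟩
        · exact lt_of_lt_of_le hs₁E.1 h1
        · exact lt_of_lt_of_le hs₂E.1 h1
      refine ⟨t, hWV ⟨hδ'W ?_, htIco⟩, htd⟩
      rw [Metric.mem_ball, Real.dist_eq, abs_lt]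
      constructor <;> [linarith [htIco.2]; linarith [htIco.2]]
    haveI := hSne
    have hmapK' : Filter.map α (F ⊓ 𝓟 S) ≤ 𝓟 K :=
      le_trans (Filter.map_mono inf_le_left) hmapK
    obtain ⟨y, hyK, hy⟩ := hK.exists_mapClusterPt hmapK'
    have hyF : MapClusterPt y F α := hy.mono inf_le_left
    have hy' : ClusterPt y (Filter.map α (F ⊓ 𝓟 S)) := hy
    have hyS : dist y x₀ = r := by
      have hle : Filter.map α (F ⊓ 𝓟 S) ≤ 𝓟 (Metric.sphere x₀ r) := by
        refine Filter.le_principal_iff.2 (Filter.mem_map.2 ?_)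
        refine Filter.mem_of_superset
          (Filter.mem_inf_of_right (Filter.mem_principal_self S)) ?_
        intro t ht
        exact ht
      have h1 := mem_closure_iff_clusterPt.2 (hy'.mono hle)
      rw [Metric.isClosed_sphere.closure_eq] at h1
      exact h1
    have hyU : y ∈ U := hδU (by rw [Metric.mem_ball, hyS]; exact hrδ)
    have hyx₀ : y = x₀ := hUdisc y hyU (hKD hyK) (claimA y hyF).2
    rw [hyx₀, dist_self] at hyS
    exact absurd hyS.symm (ne_of_gt hr0)
  refine ⟨x₀, hx₀K, htend, ?_⟩
  ext x
  simp only [Set.mem_setOf_eq, Set.mem_singleton_iff]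
  constructor
  · rintro ⟨s, hs, hsc, hsx⟩
    have hsF : Filter.Tendsto s Filter.atTop F :=
      tendsto_nhdsWithin_of_tendsto_nhds_of_eventually_within _ hsc
        (Filter.Eventually.of_forall hs)
    exact tendsto_nhds_unique hsx (htend.comp hsF)
  · rintro rfl
    have hmem : ∀ k : ℕ, c - (c - a) / (k + 1) ∈ Set.Ico a c := by
      intro k
      have hk1 : (1 : ℝ) ≤ (k : ℝ) + 1 := by
        have : (0 : ℝ) ≤ (k : ℝ) := Nat.cast_nonneg k
        linarith
      have hpos : 0 < (c - a) / ((k : ℝ) + 1) := div_pos (by linarith) (by linarith)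
      have hle : (c - a) / ((k : ℝ) + 1) ≤ c - a :=
        div_le_self (by linarith) hk1
      exact ⟨by linarith, by linarith⟩
    have hlim : Filter.Tendsto (fun k : ℕ => c - (c - a) / (k + 1))
        Filter.atTop (𝓝 c) := by
      have h0 : Filter.Tendsto (fun k : ℕ => (c - a) / ((k : ℝ) + 1))
          Filter.atTop (𝓝 0) := by
        apply Filter.Tendsto.div_atTop tendsto_const_nhds
        exact tendsto_atTop_add_const_right _ 1 tendsto_natCast_atTop_atTop
      have h1 : Filter.Tendsto (fun k : ℕ => c - (c - a) / ((k : ℝ) + 1))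
          Filter.atTop (𝓝 (c - 0)) := Filter.Tendsto.sub tendsto_const_nhds h0
      simpa using h1
    refine ⟨fun k => c - (c - a) / (k + 1), hmem, hlim, ?_⟩
    have hsF : Filter.Tendsto (fun k : ℕ => c - (c - a) / (k + 1)) Filter.atTop F :=
      tendsto_nhdsWithin_of_tendsto_nhds_of_eventually_within _ hlim
        (Filter.Eventually.of_forall hmem)
    exact htend.comp hsF


end
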